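/- Let s : P^2 × P^1 → P^5 be the Segre embedding with image X. Then the only planes (2-dimensional linear subspaces of P^5) contained in X are the fibers s(P^2 × {a}) for points a ∈ P^1. -/

import Mathlib

open Projectivization Set

/-- `ℙ^(n-1)`-style projective space of the vector space `Fin n → k`. -/
abbrev Pk (k : Type*) [Field k] (n : ℕ) := Projectivization k (Fin n → k)

/-- Segre map on vectors. -/
def segV (k : Type*) [Field k] (x : Fin 3 → k) (y : Fin 2 → k) : Fin 6 → k :=
  fun i => x ⟨i.1 / 2, by have := i.2; omega⟩ * y ⟨i.1 % 2, by omega⟩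

theorem segV_ne_zero (k : Type*) [Field k] {x : Fin 3 → k} {y : Fin 2 → k}
    (hx : x ≠ 0) (hy : y ≠ 0) : segV k x y ≠ 0 := by
  obtain ⟨a, ha⟩ := Function.ne_iff.mp hx
  obtain ⟨b, hb⟩ := Function.ne_iff.mp hy
  intro h
  have ha2 := a.2
  have hb2 := b.2
  have h6 : 2 * a.1 + b.1 < 6 := by omega
  have hkey := congrFun h ⟨2 * a.1 + b.1, h6⟩
  simp only [segV, Pi.zero_apply] at hkey
  have e1 : (⟨(2 * a.1 + b.1) / 2, by omega⟩ : Fin 3) = a := Fin.ext (by simp; omega)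
  have e2 : (⟨(2 * a.1 + b.1) % 2, by omega⟩ : Fin 2) = b := Fin.ext (by simp; omega)
  rw [e1, e2] at hkey
  exact (mul_ne_zero ha hb) hkey

/-- The Segre embedding `s : ℙ² × ℙ¹ → ℙ⁵`. -/
noncomputable def segre (k : Type*) [Field k] (p : Pk k 3) (q : Pk k 2) : Pk k 6 :=
  Projectivization.mk k (segV k p.rep q.rep) (segV_ne_zero k p.rep_nonzero q.rep_nonzero)

/-- The Segre threefold `X = s(ℙ² × ℙ¹) ⊆ ℙ⁵`. -/
def SegreX (k : Type*) [Field k] : Set (Pk k 6) := {z | ∃ p q, z = segre k p q}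

/-- The set of points of projective space lying in a linear subspace `W`. -/
def projLin {k : Type*} [Field k] {n : ℕ} (W : Submodule k (Fin n → k)) : Set (Pk k n) :=
  {p | p.rep ∈ W}

/-- The plane `F₁ = s(ℙ² × {a})` of the ruling. -/
def F1set (k : Type*) [Field k] (a : Pk k 2) : Set (Pk k 6) := {z | ∃ p, z = segre k p a}

section aux
variable {k : Type*} [Field k]

def idx6 (i : Fin 3) (j : Fin 2) : Fin 6 := ⟨2 * i.1 + j.1, by omega⟩

lemma segV_idx (x : Fin 3 → k) (y : Fin 2 → k) (i : Fin 3) (j : Fin 2) :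
    segV k x y (idx6 i j) = x i * y j := by
  have e1 : (⟨(2 * i.1 + j.1) / 2, by omega⟩ : Fin 3) = i := Fin.ext (by have := j.2; simp; omega)
  have e2 : (⟨(2 * i.1 + j.1) % 2, by omega⟩ : Fin 2) = j := Fin.ext (by have := j.2; simp; omega)
  simp only [segV, idx6]
  rw [e1, e2]

lemma segV_smul_left (c : k) (x : Fin 3 → k) (y : Fin 2 → k) :
    segV k (c • x) y = c • segV k x y := by
  funext i; simp [segV, mul_assoc]

lemma segV_smul_right (c : k) (x : Fin 3 → k) (y : Fin 2 → k) :
    segV k x (c • y) = c • segV k x y := by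
  funext i; simp [segV]; ring

lemma segV_add_left (x x' : Fin 3 → k) (y : Fin 2 → k) :
    segV k (x + x') y = segV k x y + segV k x' y := by
  funext i; simp [segV, add_mul]

lemma segV_add_right (x : Fin 3 → k) (y y' : Fin 2 → k) :
    segV k x (y + y') = segV k x y + segV k x y' := by
  funext i; simp [segV, mul_add]

/-- Linear map `x ↦ segV x y`. -/
def sL (y : Fin 2 → k) : (Fin 3 → k) →ₗ[k] (Fin 6 → k) where
  toFun x := segV k x y
  map_add' x x' := segV_add_left x x' y
  map_smul' c x := segV_smul_left c x y

/-- Linear map `y ↦ segV x y`. -/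
def sR (x : Fin 3 → k) : (Fin 2 → k) →ₗ[k] (Fin 6 → k) where
  toFun y := segV k x y
  map_add' y y' := segV_add_right x y y'
  map_smul' c y := segV_smul_right c x y

def mnr (v : Fin 6 → k) (i i' : Fin 3) : k :=
  v (idx6 i 0) * v (idx6 i' 1) - v (idx6 i 1) * v (idx6 i' 0)

lemma mnr_segV (x : Fin 3 → k) (y : Fin 2 → k) (i i' : Fin 3) :
    mnr (segV k x y) i i' = 0 := by
  simp [mnr, segV_idx]; ring

lemma mnr_sum (x₁ x₂ : Fin 3 → k) (y₁ y₂ : Fin 2 → k) (i i' : Fin 3) :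
    mnr (segV k x₁ y₁ + segV k x₂ y₂) i i' =
      (x₁ i * x₂ i' - x₁ i' * x₂ i) * (y₁ 0 * y₂ 1 - y₁ 1 * y₂ 0) := by
  simp [mnr, segV_idx, Pi.add_apply]; ring

lemma prop_two {y₀ y : Fin 2 → k} (h0 : y₀ ≠ 0)
    (hdet : y₀ 0 * y 1 - y₀ 1 * y 0 = 0) : ∃ c : k, y = c • y₀ := by
  by_cases h : y₀ 0 = 0
  · have h1 : y₀ 1 ≠ 0 := by
      intro h1; apply h0; funext j; fin_cases j <;> simp [h, h1]
    have hy0 : y 0 = 0 := by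
      have h2 : y₀ 1 * y 0 = 0 := by linear_combination -hdet + y 1 * h
      rcases mul_eq_zero.mp h2 with h' | h'
      · exact absurd h' h1
      · exact h'
    refine ⟨y 1 / y₀ 1, ?_⟩
    funext j
    fin_cases j
    · show y 0 = y 1 / y₀ 1 * y₀ 0
      rw [hy0, h, mul_zero]
    · show y 1 = y 1 / y₀ 1 * y₀ 1
      rw [div_mul_eq_mul_div, eq_div_iff h1]
  · refine ⟨y 0 / y₀ 0, ?_⟩
    funext j
    fin_cases j
    · show y 0 = y 0 / y₀ 0 * y₀ 0
      rw [div_mul_eq_mul_div, eq_div_iff h]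
    · show y 1 = y 0 / y₀ 0 * y₀ 1
      rw [div_mul_eq_mul_div, eq_div_iff h]
      linear_combination hdet

lemma prop_three {x₀ x : Fin 3 → k} (h0 : x₀ ≠ 0)
    (h : ∀ i i', x₀ i * x i' = x₀ i' * x i) : ∃ c : k, x = c • x₀ := by
  obtain ⟨i₀, hi₀⟩ := Function.ne_iff.mp h0
  simp only [Pi.zero_apply] at hi₀
  refine ⟨x i₀ / x₀ i₀, ?_⟩
  funext i
  simp only [Pi.smul_apply, smul_eq_mul]
  rw [div_mul_eq_mul_div, eq_div_iff hi₀]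
  linear_combination h i₀ i

end aux

/-- the only planes (2-dimensional linear subspaces, i.e. projectivizations of
3-dimensional vector subspaces) of ℙ⁵ contained in the Segre threefold
X = s(ℙ² × ℙ¹) are the fibers s(ℙ² × {a}), a ∈ ℙ¹. -/
theorem statement0 (k : Type*) [Field k] [IsAlgClosed k]
    (W : Submodule k (Fin 6 → k)) (hW : Module.finrank k W = 3)
    (hsub : projLin W ⊆ SegreX k) :
    ∃ a : Pk k 2, projLin W = F1set k a := by
  classical
  -- every nonzero element of W is of segV form
  have hrank : ∀ v, v ∈ W → ∀ hv0 : v ≠ 0,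
      ∃ (x : Fin 3 → k) (y : Fin 2 → k), x ≠ 0 ∧ y ≠ 0 ∧ v = segV k x y := by
    intro v hv hv0
    have hmem : (Projectivization.mk k v hv0) ∈ projLin W := by
      obtain ⟨a, ha⟩ := Projectivization.exists_smul_eq_mk_rep k v hv0
      have ha' : (a : k) • v = (Projectivization.mk k v hv0).rep := ha
      show (Projectivization.mk k v hv0).rep ∈ W
      rw [← ha']
      exact W.smul_mem _ hv
    obtain ⟨p, q, hpq⟩ := hsub hmem
    rw [segre, Projectivization.mk_eq_mk_iff] at hpq
    obtain ⟨b, hb⟩ := hpq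
    have hb' : (b : k) • segV k p.rep q.rep = v := hb
    refine ⟨(b : k) • p.rep, q.rep, ?_, q.rep_nonzero, ?_⟩
    · exact smul_ne_zero b.ne_zero p.rep_nonzero
    · rw [segV_smul_left, hb']
  -- all minors vanish on W
  have hmnr : ∀ v ∈ W, ∀ i i', mnr v i i' = 0 := by
    intro v hv i i'
    by_cases hv0 : v = 0
    · simp [mnr, hv0]
    · obtain ⟨x, y, _, _, rfl⟩ := hrank v hv hv0
      exact mnr_segV x y i i'
  -- a nonzero element of W
  have hWbot : W ≠ ⊥ := by
    intro h; rw [h] at hW; simp at hW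
  obtain ⟨v₀, hv₀W, hv₀⟩ := Submodule.exists_mem_ne_zero_of_ne_bot hWbot
  obtain ⟨x₀, y₀, hx₀, hy₀, hv₀eq⟩ := hrank v₀ hv₀W hv₀
  set U : Submodule k (Fin 6 → k) := LinearMap.range (sL y₀) with hUdef
  set V2 : Submodule k (Fin 6 → k) := LinearMap.range (sR x₀) with hV2def
  -- every element of W is in U or V2
  have hUV : ∀ w ∈ W, w ∈ U ∨ w ∈ V2 := by
    intro w hw
    by_cases hw0 : w = 0
    · left; rw [hw0]; exact zero_mem _
    obtain ⟨xw, yw, hxw, hyw, rfl⟩ := hrank w hw hw0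
    by_cases hdet : y₀ 0 * yw 1 - y₀ 1 * yw 0 = 0
    · left
      obtain ⟨c, hc⟩ := prop_two hy₀ hdet
      refine ⟨c • xw, ?_⟩
      show segV k (c • xw) y₀ = segV k xw yw
      rw [segV_smul_left, ← segV_smul_right, ← hc]
    · right
      have hsumW : segV k x₀ y₀ + segV k xw yw ∈ W :=
        W.add_mem (by rw [← hv₀eq]; exact hv₀W) hw
      have hcross : ∀ i i', x₀ i * xw i' = x₀ i' * xw i := by
        intro i i'
        have h := hmnr _ hsumW i i'
        rw [mnr_sum] at h
        rcases mul_eq_zero.mp h with h' | h'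
        · linear_combination h'
        · exact absurd h' hdet
      obtain ⟨c, hc⟩ := prop_three hx₀ hcross
      refine ⟨c • yw, ?_⟩
      show segV k x₀ (c • yw) = segV k xw yw
      rw [segV_smul_right, ← segV_smul_left, ← hc]
  -- V2 has rank ≤ 2
  have hV2rk : Module.finrank k V2 ≤ 2 := by
    have h := LinearMap.finrank_range_le (sR x₀ : (Fin 2 → k) →ₗ[k] (Fin 6 → k))
    simpa [Module.finrank_fintype_fun_eq_card] using h
  -- W ≤ U
  have hWU : W ≤ U := by
    have hnV : ¬ (∀ w ∈ W, w ∈ V2) := by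
      intro hall
      have hle : W ≤ V2 := hall
      have h := Submodule.finrank_mono hle
      rw [hW] at h
      omega
    push_neg at hnV
    obtain ⟨b, hbW, hbV⟩ := hnV
    have hbU : b ∈ U := (hUV b hbW).resolve_right hbV
    intro w hw
    rcases hUV w hw with h | h
    · exact h
    · have hwb : w + b ∈ W := W.add_mem hw hbW
      rcases hUV _ hwb with h' | h'
      · have : w = (w + b) - b := by abel
        rw [this]
        exact U.sub_mem h' hbU
      · exact absurd (by simpa using V2.sub_mem h' h) hbV
  -- U has rank 3
  have hinj : Function.Injective (sL y₀ : (Fin 3 → k) →ₗ[k] (Fin 6 → k)) := by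
    rw [← LinearMap.ker_eq_bot, Submodule.eq_bot_iff]
    intro x hx
    by_contra hx0
    exact segV_ne_zero k hx0 hy₀ hx
  have hUrk : Module.finrank k U = 3 := by
    rw [hUdef, LinearMap.finrank_range_of_inj hinj, Module.finrank_fintype_fun_eq_card]
    simp
  have hWeq : W = U := Submodule.eq_of_le_of_finrank_le hWU (by rw [hW, hUrk])
  -- conclusion
  refine ⟨Projectivization.mk k y₀ hy₀, ?_⟩
  ext z
  constructor
  · intro hz
    have hz' : z.rep ∈ U := hWeq ▸ hz
    obtain ⟨x, hx⟩ := hz'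
    have hx' : segV k x y₀ = z.rep := hx
    have hx0 : x ≠ 0 := by
      intro h0
      apply z.rep_nonzero
      rw [← hx', h0]
      funext i; simp [segV]
    refine ⟨Projectivization.mk k x hx0, ?_⟩
    obtain ⟨a, ha⟩ := Projectivization.exists_smul_eq_mk_rep k x hx0
    have ha' : (a : k) • x = (Projectivization.mk k x hx0).rep := ha
    obtain ⟨b, hb⟩ := Projectivization.exists_smul_eq_mk_rep k y₀ hy₀
    have hb' : (b : k) • y₀ = (Projectivization.mk k y₀ hy₀).rep := hb
    rw [← Projectivization.mk_rep z, segre, Projectivization.mk_eq_mk_iff]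
    have hseg : segV k (Projectivization.mk k x hx0).rep
        (Projectivization.mk k y₀ hy₀).rep = ((a : k) * (b : k)) • z.rep := by
      rw [← ha', ← hb', segV_smul_left, segV_smul_right, smul_smul, hx']
    refine ⟨(a * b)⁻¹, ?_⟩
    have hab : (((a * b)⁻¹ : kˣ) : k) * ((a : k) * (b : k)) = 1 := by
      have h := Units.inv_mul (a * b)
      rwa [Units.val_mul] at h
    calc ((a * b)⁻¹ : kˣ) • segV k (Projectivization.mk k x hx0).rep
          (Projectivization.mk k y₀ hy₀).rep
        = (((a * b)⁻¹ : kˣ) : k) • (((a : k) * (b : k)) • z.rep) := by rw [hseg]; rfl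
      _ = ((((a * b)⁻¹ : kˣ) : k) * ((a : k) * (b : k))) • z.rep := by rw [smul_smul]
      _ = z.rep := by rw [hab, one_smul]
  · rintro ⟨p, hp⟩
    show z.rep ∈ W
    rw [hWeq, hp]
    obtain ⟨b, hb⟩ := Projectivization.exists_smul_eq_mk_rep k y₀ hy₀
    have hb' : (b : k) • y₀ = (Projectivization.mk k y₀ hy₀).rep := hb
    rw [segre]
    obtain ⟨u, hu⟩ := Projectivization.exists_smul_eq_mk_rep k
      (segV k p.rep (Projectivization.mk k y₀ hy₀).rep)
      (segV_ne_zero k p.rep_nonzero (Projectivization.mk k y₀ hy₀).rep_nonzero)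
    have hu' : (u : k) • segV k p.rep (Projectivization.mk k y₀ hy₀).rep =
        (Projectivization.mk k (segV k p.rep (Projectivization.mk k y₀ hy₀).rep)
          (segV_ne_zero k p.rep_nonzero (Projectivization.mk k y₀ hy₀).rep_nonzero)).rep := hu
    refine ⟨((u : k) * (b : k)) • p.rep, ?_⟩
    show segV k (((u : k) * (b : k)) • p.rep) y₀ = _
    rw [← hu', ← hb', segV_smul_right, segV_smul_left, mul_smul]
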